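/- Let T : X → X be a continuous map on a metric space X, let 𝒞 be a set of T-invariant Borel probability measures, and let 𝒫 = {P_1,…,P_N} be a finite Borel partition of X such that μ(∂P_i) = 0 for every μ ∈ 𝒞 and every i. Then the map μ ↦ h_μ(T,𝒫) := lim_n (1/n) H_μ(⋁_{i=0}^{n-1} T^{-i}𝒫) is upper semi-continuous on 𝒞 with respect to the weak* topology. -/

import Mathlib

open MeasureTheory Filter Topology
open scoped ENNReal

/-- Entropy of a finite (indexed) collection of sets: `-∑ μ(Pᵢ) log μ(Pᵢ)`
(with `0 log 0 = 0`, automatic since `Real.log 0 = 0`). -/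
noncomputable def partEnt {X : Type*} [MeasurableSpace X] (μ : Measure X)
    {ι : Type*} [Fintype ι] (P : ι → Set X) : ℝ :=
  -∑ i, ((μ (P i)).toReal * Real.log (μ (P i)).toReal)

/-- The common refinement `⋁_{i=0}^{n-1} T^{-i} 𝒫`, indexed by words `s : Fin n → Fin N`. -/
def refineP {X : Type*} (T : X → X) {N : ℕ} (P : Fin N → Set X) (n : ℕ) :
    (Fin n → Fin N) → Set X :=
  fun s => ⋂ i : Fin n, (T^[(i : ℕ)]) ⁻¹' P (s i)

/-- Entropy of `μ` relative to the finite partition `P`: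
`h_μ(T,𝒫) = inf_n (1/n) H_μ(𝒫ⁿ)` (which equals the limit, by subadditivity). -/
noncomputable def dynEnt {X : Type*} [MeasurableSpace X] (T : X → X) (μ : Measure X)
    {N : ℕ} (P : Fin N → Set X) : ℝ :=
  ⨅ n : ℕ, partEnt μ (refineP T P (n + 1)) / (n + 1)

/-- `P` is a finite Borel partition of `X`. -/
def IsFinPartition {X : Type*} [MeasurableSpace X] {N : ℕ} (P : Fin N → Set X) : Prop :=
  (∀ i, MeasurableSet (P i)) ∧ (Pairwise fun i j => Disjoint (P i) (P j)) ∧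
    (⋃ i, P i) = Set.univ

/-- Kolmogorov–Sinai entropy of `(T,μ)`: supremum of `h_μ(T,𝒫)` over all finite Borel
partitions `𝒫`, valued in `ℝ≥0∞`. -/
noncomputable def KSEnt {X : Type*} [MeasurableSpace X] (T : X → X) (μ : Measure X) : ℝ≥0∞ :=
  ⨆ (N : ℕ) (P : {P : Fin N → Set X // IsFinPartition P}), ENNReal.ofReal (dynEnt T μ P.1)

theorem frontier_iInter_subset' {X ι : Type*} [TopologicalSpace X] [Finite ι] (A : ι → Set X) :
    frontier (⋂ i, A i) ⊆ ⋃ i, frontier (A i) := by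
  intro x hx
  have h1 : ∀ i, x ∈ closure (A i) := fun i => closure_mono (Set.iInter_subset A i) hx.1
  have h2 : x ∉ ⋂ i, interior (A i) := by
    rw [← interior_iInter_of_finite]; exact hx.2
  simp only [Set.mem_iInter, not_forall] at h2
  obtain ⟨i, hi⟩ := h2
  exact Set.mem_iUnion.2 ⟨i, h1 i, hi⟩

theorem partEnt_nonneg {X : Type*} [MeasurableSpace X] (μ : Measure X) [IsProbabilityMeasure μ]
    {ι : Type*} [Fintype ι] (P : ι → Set X) : 0 ≤ partEnt μ P := by
  rw [partEnt, neg_nonneg]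
  refine Finset.sum_nonpos fun i _ => mul_nonpos_of_nonneg_of_nonpos ENNReal.toReal_nonneg ?_
  refine Real.log_nonpos ENNReal.toReal_nonneg ?_
  calc ((μ (P i)).toReal) ≤ (1 : ℝ≥0∞).toReal := ENNReal.toReal_mono ENNReal.one_ne_top prob_le_one
  _ = 1 := by simp

/-- If `𝒫` is a finite partition whose pieces have `μ`-null boundary for each `μ ∈ 𝒞`,
then `μ ↦ h_μ(T,𝒫)` is upper semi-continuous on `𝒞` (weak* topology). -/
theorem stmt4 {X : Type*} [MetricSpace X] [MeasurableSpace X] [BorelSpace X]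
    (T : X → X) (hT : Continuous T) (𝒞 : Set (ProbabilityMeasure X))
    (hinv : ∀ μ ∈ 𝒞, ∀ A : Set X, MeasurableSet A →
      (μ : Measure X) (T ⁻¹' A) = (μ : Measure X) A)
    {N : ℕ} (P : Fin N → Set X) (hP : IsFinPartition P)
    (hbd : ∀ μ ∈ 𝒞, ∀ i, (μ : Measure X) (frontier (P i)) = 0) :
    UpperSemicontinuousOn (fun μ : ProbabilityMeasure X => dynEnt T (μ : Measure X) P) 𝒞 := by
  have hiter : ∀ μ ∈ 𝒞, ∀ k : ℕ, ∀ A : Set X, MeasurableSet A →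
      (μ : Measure X) (T^[k] ⁻¹' A) = (μ : Measure X) A := by
    intro μ hμ k
    induction k with
    | zero => intro A _; simp
    | succ k ih =>
      intro A hA
      rw [Function.iterate_succ', Set.preimage_comp, ih _ (hA.preimage hT.measurable),
        hinv μ hμ A hA]
  have hnull : ∀ μ ∈ 𝒞, ∀ n (s : Fin n → Fin N),
      (μ : Measure X) (frontier (refineP T P n s)) = 0 := by
    intro μ hμ n s
    have hsub : frontier (refineP T P n s) ⊆
        ⋃ i : Fin n, T^[(i : ℕ)] ⁻¹' frontier (P (s i)) := by
      refine (frontier_iInter_subset' _).trans (Set.iUnion_mono fun i => ?_)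
      exact (hT.iterate _).frontier_preimage_subset _
    refine measure_mono_null hsub (measure_iUnion_null fun i => ?_)
    rw [hiter μ hμ _ _ isClosed_frontier.measurableSet, hbd μ hμ _]
  intro μ₀ hμ₀
  have hcont : ∀ n : ℕ, ContinuousWithinAt
      (fun μ : ProbabilityMeasure X => partEnt (μ : Measure X) (refineP T P (n + 1)) / (n + 1))
      𝒞 μ₀ := by
    intro n
    apply ContinuousWithinAt.div_const
    apply ContinuousWithinAt.neg
    refine tendsto_finset_sum _ fun s _ => ?_
    have hQ : ContinuousWithinAt
        (fun μ : ProbabilityMeasure X => ((μ : Measure X) (refineP T P (n + 1) s)).toReal)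
        𝒞 μ₀ := by
      have hbd' : μ₀ (frontier (refineP T P (n + 1) s)) = 0 :=
        (ProbabilityMeasure.null_iff_toMeasure_null _ _).2 (hnull μ₀ hμ₀ _ s)
      have key := ProbabilityMeasure.tendsto_measure_of_null_frontier_of_tendsto
        (L := 𝓝[𝒞] μ₀) (μs := fun ν : ProbabilityMeasure X => ν)
        (tendsto_id.mono_left nhdsWithin_le_nhds) hbd'
      have := (NNReal.continuous_coe.tendsto _).comp key
      simp only [← ProbabilityMeasure.ennreal_coeFn_eq_coeFn_toMeasure, ENNReal.coe_toReal]; exact this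
    exact (Real.continuous_mul_log.continuousAt).comp_continuousWithinAt hQ
  intro y hy
  obtain ⟨n, hn⟩ := exists_lt_of_ciInf_lt hy
  have hev := ((hcont n) : Tendsto _ _ _).eventually_lt_const hn
  refine hev.mono fun ν hν => lt_of_le_of_lt ?_ hν
  exact ciInf_le ⟨0, Set.forall_mem_range.2 fun m =>
    div_nonneg (partEnt_nonneg _ _) (by positivity)⟩ n
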